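/- In the inverse braid monoid IBₙ, the Garside fundamental element Δ = (σ₁⋯σₙ₋₁)(σ₁⋯σₙ₋₂)⋯(σ₁σ₂)σ₁ satisfies εᵢΔ = Δεₙ₊₁₋ᵢ for every i with 1 ≤ i ≤ n. -/

import Mathlib

/-!
STATEMENT 17: In the inverse braid monoid IBₙ, the Garside fundamental
element Δ = (σ₁⋯σₙ₋₁)(σ₁⋯σₙ₋₂)⋯(σ₁σ₂)σ₁ satisfies εᵢΔ = Δεₙ₊₁₋ᵢ for every
1 ≤ i ≤ n.
-/
open FreeMonoid

/-- Generators of the inverse braid monoid `IBₙ`: `σᵢ`, `σᵢ⁻¹`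
(index `i : Fin (n-1)` stands for subscript `i+1`) and `ε₁, …, εₙ`
(as `eps j`, `j : Fin n`, `j` standing for `ε_{j+1}`). -/
inductive IBGen (n : ℕ) : Type
  | sig (i : Fin (n - 1)) : IBGen n
  | sinv (i : Fin (n - 1)) : IBGen n
  | eps (j : Fin n) : IBGen n

open IBGen in
/-- The defining relations of the inverse braid monoid `IBₙ`. -/
inductive ibRel (n : ℕ) : FreeMonoid (IBGen n) → FreeMonoid (IBGen n) → Prop
  | braid_comm (i j : Fin (n - 1)) (h : i.val + 1 < j.val ∨ j.val + 1 < i.val) :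
      ibRel n (of (sig i) * of (sig j)) (of (sig j) * of (sig i))
  | braid (i j : Fin (n - 1)) (h : j.val = i.val + 1) :
      ibRel n (of (sig i) * of (sig j) * of (sig i))
              (of (sig j) * of (sig i) * of (sig j))
  | inv_right (i : Fin (n - 1)) : ibRel n (of (sig i) * of (sinv i)) 1
  | inv_left (i : Fin (n - 1)) : ibRel n (of (sinv i) * of (sig i)) 1
  | eps_comm (j : Fin n) (i : Fin (n - 1))
      (h : j.val ≠ i.val ∧ j.val ≠ i.val + 1) :
      ibRel n (of (eps j) * of (sig i)) (of (sig i) * of (eps j))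
  | eps_shift₁ (i : Fin (n - 1)) :
      ibRel n (of (eps ⟨i.val, by have := i.isLt; omega⟩) * of (sig i))
              (of (sig i) * of (eps ⟨i.val + 1, by have := i.isLt; omega⟩))
  | eps_shift₂ (i : Fin (n - 1)) :
      ibRel n (of (eps ⟨i.val + 1, by have := i.isLt; omega⟩) * of (sig i))
              (of (sig i) * of (eps ⟨i.val, by have := i.isLt; omega⟩))
  | idem (j : Fin n) : ibRel n (of (eps j)) (of (eps j) * of (eps j))
  | eps_sq₁ (i : Fin (n - 1)) :
      ibRel n (of (eps ⟨i.val + 1, by have := i.isLt; omega⟩) * of (sig i) * of (sig i))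
              (of (eps ⟨i.val + 1, by have := i.isLt; omega⟩))
  | eps_sq₂ (i : Fin (n - 1)) :
      ibRel n (of (sig i) * of (sig i) * of (eps ⟨i.val + 1, by have := i.isLt; omega⟩))
              (of (eps ⟨i.val + 1, by have := i.isLt; omega⟩))
  | eps_pair₁ (i : Fin (n - 1)) :
      ibRel n (of (eps ⟨i.val, by have := i.isLt; omega⟩) *
               of (eps ⟨i.val + 1, by have := i.isLt; omega⟩) * of (sig i))
              (of (sig i) * of (eps ⟨i.val, by have := i.isLt; omega⟩) *
               of (eps ⟨i.val + 1, by have := i.isLt; omega⟩))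
  | eps_pair₂ (i : Fin (n - 1)) :
      ibRel n (of (eps ⟨i.val, by have := i.isLt; omega⟩) *
               of (eps ⟨i.val + 1, by have := i.isLt; omega⟩) * of (sig i))
              (of (eps ⟨i.val, by have := i.isLt; omega⟩) *
               of (eps ⟨i.val + 1, by have := i.isLt; omega⟩))

/-- The inverse braid monoid `IBₙ`. -/
def InvBraidMonoid (n : ℕ) : Type := PresentedMonoid (ibRel n)

instance (n : ℕ) : Monoid (InvBraidMonoid n) :=
  inferInstanceAs (Monoid (PresentedMonoid (ibRel n)))

/-- The canonical projection from the free monoid to `IBₙ`. -/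
def ibWordM (n : ℕ) (w : FreeMonoid (IBGen n)) : InvBraidMonoid n :=
  PresentedMonoid.mk (ibRel n) w

/-- `σ_k` (1-based index) as a word in the free monoid on the generators of
`IBₙ` (the unit on out-of-range indices). -/
def sgw (n k : ℕ) : FreeMonoid (IBGen n) :=
  if h : 1 ≤ k ∧ k ≤ n - 1 then of (IBGen.sig ⟨k - 1, by omega⟩) else 1

/-- `ε_k` (1-based index) as a word in the free monoid on the generators of
`IBₙ`. -/
def epw (n k : ℕ) : FreeMonoid (IBGen n) :=
  if h : 1 ≤ k ∧ k ≤ n then of (IBGen.eps ⟨k - 1, by omega⟩) else 1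

/-- The Garside fundamental word
`Δ = (σ₁⋯σₙ₋₁)(σ₁⋯σₙ₋₂)⋯(σ₁σ₂)σ₁`. -/
def garsideWord (n : ℕ) : FreeMonoid (IBGen n) :=
  ((List.range (n - 1)).map
    (fun k => ((List.range (n - 1 - k)).map (fun j => sgw n (j + 1))).prod)).prod

/-- The Garside fundamental element `Δ` of `IBₙ`. -/
def garsideM (n : ℕ) : InvBraidMonoid n := ibWordM n (garsideWord n)

namespace IBAux

variable {n : ℕ}

theorem ib_sound {a b : FreeMonoid (IBGen n)} (h : ibRel n a b) :
    ibWordM n a = ibWordM n b :=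
  Quotient.sound (ConGen.Rel.of a b h)

theorem ib_mul (a b : FreeMonoid (IBGen n)) :
    ibWordM n (a * b) = ibWordM n a * ibWordM n b := rfl

/-- the transposition `(k, k+1)` acting on 1-based indices -/
def swp (k j : ℕ) : ℕ := if j = k then k + 1 else if j = k + 1 then k else j

theorem eps_sg (k j : ℕ) (hk1 : 1 ≤ k) (hk2 : k ≤ n - 1)
    (hj1 : 1 ≤ j) (hj2 : j ≤ n) :
    ibWordM n (epw n j) * ibWordM n (sgw n k) =
      ibWordM n (sgw n k) * ibWordM n (epw n (swp k j)) := by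
  have hkn : k ≤ n := by omega
  rw [← ib_mul, ← ib_mul]
  rw [sgw, dif_pos ⟨hk1, hk2⟩, epw, dif_pos ⟨hj1, hj2⟩]
  unfold swp
  by_cases h1 : j = k
  · subst h1
    rw [if_pos rfl, epw, dif_pos (by omega : 1 ≤ j + 1 ∧ j + 1 ≤ n)]
    have e1 : (⟨j - 1, by omega⟩ : Fin n) =
        ⟨(⟨j - 1, by omega⟩ : Fin (n-1)).val, by omega⟩ := rfl
    have e2 : (⟨j + 1 - 1, by omega⟩ : Fin n) =
        ⟨(⟨j - 1, by omega⟩ : Fin (n-1)).val + 1, show j - 1 + 1 < n by omega⟩ := by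
      apply Fin.ext; show j + 1 - 1 = (j - 1) + 1; omega
    rw [e1, e2]
    exact ib_sound (ibRel.eps_shift₁ ⟨j - 1, by omega⟩)
  · by_cases h2 : j = k + 1
    · subst h2
      rw [if_neg h1, if_pos rfl, epw, dif_pos ⟨hk1, hkn⟩]
      have e1 : (⟨k + 1 - 1, by omega⟩ : Fin n) =
          ⟨(⟨k - 1, by omega⟩ : Fin (n-1)).val + 1, show k - 1 + 1 < n by omega⟩ := by
        apply Fin.ext; show k + 1 - 1 = (k - 1) + 1; omega
      have e2 : (⟨k - 1, by omega⟩ : Fin n) =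
          ⟨(⟨k - 1, by omega⟩ : Fin (n-1)).val, by omega⟩ := rfl
      rw [e1, e2]
      exact ib_sound (ibRel.eps_shift₂ ⟨k - 1, by omega⟩)
    · rw [if_neg h1, if_neg h2, epw, dif_pos ⟨hj1, hj2⟩]
      exact ib_sound (ibRel.eps_comm ⟨j - 1, by omega⟩ ⟨k - 1, by omega⟩
        (show j - 1 ≠ k - 1 ∧ j - 1 ≠ (k - 1) + 1 by omega))

/-- the word `σ₁ σ₂ ⋯ σ_m` -/
def cword (n m : ℕ) : FreeMonoid (IBGen n) :=
  ((List.range m).map (fun j => sgw n (j + 1))).prod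

theorem cword_succ (m : ℕ) : cword n (m + 1) = cword n m * sgw n (m + 1) := by
  unfold cword
  rw [List.range_succ, List.map_append, List.prod_append, List.map_singleton,
    List.prod_singleton]

/-- the cycle `1 ↦ m+1, j ↦ j-1 (2 ≤ j ≤ m+1)` -/
def cyc (m j : ℕ) : ℕ := if j = 1 then m + 1 else if j ≤ m + 1 then j - 1 else j

theorem cyc_bounds (m j : ℕ) (hm : m ≤ n - 1) (hj1 : 1 ≤ j) (hj2 : j ≤ n) :
    1 ≤ cyc m j ∧ cyc m j ≤ n := by
  unfold cyc; split_ifs <;> omega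

theorem eps_cword (m j : ℕ) (hm : m ≤ n - 1) (hj1 : 1 ≤ j) (hj2 : j ≤ n) :
    ibWordM n (epw n j) * ibWordM n (cword n m) =
      ibWordM n (cword n m) * ibWordM n (epw n (cyc m j)) := by
  induction m with
  | zero =>
    have : cyc 0 j = j := by unfold cyc; split_ifs <;> omega
    rw [this]
    have c0 : cword n 0 = 1 := rfl
    rw [c0]; rw [← ib_mul, ← ib_mul, mul_one, one_mul]
  | succ m ih =>
    have hm' : m ≤ n - 1 := by omega
    rw [cword_succ, ib_mul, ← mul_assoc, ih hm', mul_assoc]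
    obtain ⟨hb1, hb2⟩ := cyc_bounds (n := n) m j hm' hj1 hj2
    rw [eps_sg (m + 1) (cyc m j) (by omega) hm hb1 hb2]
    have : swp (m + 1) (cyc m j) = cyc (m + 1) j := by
      unfold swp cyc; split_ifs <;> omega
    rw [this, mul_assoc]

/-- the word `C_t C_{t-1} ⋯ C_1` where `C_m = σ₁ ⋯ σ_m` -/
def eword (n t : ℕ) : FreeMonoid (IBGen n) :=
  ((List.range t).map (fun k => cword n (t - k))).prod

theorem eword_succ (t : ℕ) : eword n (t + 1) = cword n (t + 1) * eword n t := by
  unfold eword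
  rw [List.range_succ_eq_map, List.map_cons, List.map_map, List.prod_cons]
  simp [Function.comp_def, Nat.succ_sub_succ]

/-- the reversal permutation of `{1, …, t+1}` -/
def rev (t j : ℕ) : ℕ := if j ≤ t + 1 then t + 2 - j else j

theorem eps_eword (t j : ℕ) (ht : t ≤ n - 1) (hj1 : 1 ≤ j) (hj2 : j ≤ n) :
    ibWordM n (epw n j) * ibWordM n (eword n t) =
      ibWordM n (eword n t) * ibWordM n (epw n (rev t j)) := by
  revert ht hj1 hj2
  induction t generalizing j with
  | zero =>
    intro ht hj1 hj2
    have : rev 0 j = j := by unfold rev; split_ifs <;> omega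
    rw [this]
    have e0 : eword n 0 = 1 := rfl
    rw [e0]; rw [← ib_mul, ← ib_mul, mul_one, one_mul]
  | succ t ih =>
    intro ht hj1 hj2
    have ht' : t ≤ n - 1 := by omega
    rw [eword_succ, ib_mul, ← mul_assoc,
      eps_cword (t + 1) j ht hj1 hj2, mul_assoc]
    obtain ⟨hb1, hb2⟩ := cyc_bounds (n := n) (t + 1) j ht hj1 hj2
    rw [ih (cyc (t + 1) j) ht' hb1 hb2, ← mul_assoc]
    have : rev t (cyc (t + 1) j) = rev (t + 1) j := by
      unfold rev cyc; split_ifs <;> omega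
    rw [this, mul_assoc]

theorem garside_eq : garsideM n = ibWordM n (eword n (n - 1)) := rfl

end IBAux

theorem eps_garside_commutation (n : ℕ) (i : ℕ) (h₁ : 1 ≤ i) (h₂ : i ≤ n) :
    ibWordM n (epw n i) * garsideM n =
      garsideM n * ibWordM n (epw n (n + 1 - i)) := by
  rw [IBAux.garside_eq, IBAux.eps_eword (n - 1) i (le_refl _) h₁ h₂]
  have : IBAux.rev (n - 1) i = n + 1 - i := by
    unfold IBAux.rev; split_ifs <;> omega
  rw [this]
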